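/- arXiv:2412.16776 — 4 statements merged into one kernel-verified Lean document; each statement's English description precedes it below -/
import Mathlib

section
/- Fix x > 0 and let L = {m·(x, 0) + n·(x/2, (√3/2)·x) : m, n ∈ ℤ} ⊂ ℝ² be the equilateral triangular lattice of edge length x. Let F = {(0,0), (x,0)}, whose minimum bounding ball has center c = (x/2, 0) and radius x/2. Then the minimum of ‖p − c‖ over p ∈ L \ F equals (√3/2)·x, so the signed distance min_{p ∈ L \ F} ‖p − c‖ − x/2 equals ((√3 − 1)/2)·x, which is strictly positive; in particular F satisfies the Minimum-Ball condition with respect to L. -/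
noncomputable def pt2 (a b : ℝ) : EuclideanSpace ℝ (Fin 2) :=
  (WithLp.equiv 2 (Fin 2 → ℝ)).symm ![a, b]

lemma smul_add_pt2 (r s a b c d : ℝ) :
    r • pt2 a b + s • pt2 c d = pt2 (r*a + s*c) (r*b + s*d) := by
  ext i
  fin_cases i <;> simp [pt2]

lemma dist_pt2 (a b c d : ℝ) :
    dist (pt2 a b) (pt2 c d) = Real.sqrt ((a-c)^2 + (b-d)^2) := by
  rw [EuclideanSpace.dist_eq]
  simp [pt2, Fin.sum_univ_two, Real.dist_eq, sq_abs]

lemma pt2_inj {a b c d : ℝ} (h : pt2 a b = pt2 c d) : a = c ∧ b = d := by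
  constructor
  · have := congrFun (congrArg (WithLp.equiv 2 (Fin 2 → ℝ)) h) 0
    simpa [pt2] using this
  · have := congrFun (congrArg (WithLp.equiv 2 (Fin 2 → ℝ)) h) 1
    simpa [pt2] using this

lemma pt2_congr {a b c d : ℝ} (h1 : a = c) (h2 : b = d) : pt2 a b = pt2 c d := by
  rw [h1, h2]

/-- In the equilateral triangular lattice `L` of edge length `x > 0`,
the face `F = {(0,0), (x,0)}` has minimum bounding ball of center `c = (x/2, 0)` and
radius `x/2`; the minimum of `‖p − c‖` over `p ∈ L \ F` equals `(√3/2)·x`, hence the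
signed distance equals `((√3 − 1)/2)·x > 0`, and in particular `F` satisfies the
Minimum-Ball condition with respect to `L`. -/
theorem triangular_lattice_minimum_ball (x : ℝ) (hx : 0 < x) :
    let v₁ : EuclideanSpace ℝ (Fin 2) := pt2 x 0
    let v₂ : EuclideanSpace ℝ (Fin 2) := pt2 (x / 2) (Real.sqrt 3 / 2 * x)
    let L : Set (EuclideanSpace ℝ (Fin 2)) :=
      {q | ∃ m n : ℤ, q = (m : ℝ) • v₁ + (n : ℝ) • v₂}
    let F : Set (EuclideanSpace ℝ (Fin 2)) := {pt2 0 0, pt2 x 0}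
    let c : EuclideanSpace ℝ (Fin 2) := pt2 (x / 2) 0
    -- `c` is the center of the minimum bounding ball of `F`, of radius `x/2`
    (∀ p ∈ F, dist p c = x / 2) ∧
    -- the minimum of `‖p − c‖` over `p ∈ L \ F` equals `(√3/2)·x`
    IsLeast ((fun p => dist p c) '' (L \ F)) (Real.sqrt 3 / 2 * x) ∧
    -- the signed distance equals `((√3 − 1)/2)·x`, which is strictly positive
    Real.sqrt 3 / 2 * x - x / 2 = (Real.sqrt 3 - 1) / 2 * x ∧
    0 < (Real.sqrt 3 - 1) / 2 * x ∧
    -- Minimum-Ball condition: no point of `L \ F` lies strictly inside the ball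
    ∀ p ∈ L \ F, ¬ dist p c < x / 2 := by
  intro v₁ v₂ L F c
  have h3 : Real.sqrt 3 ^ 2 = 3 := Real.sq_sqrt (by norm_num)
  have h3nn : 0 ≤ Real.sqrt 3 := Real.sqrt_nonneg 3
  have h31 : 1 < Real.sqrt 3 := by nlinarith
  -- lower bound
  have key : ∀ p ∈ L \ F, Real.sqrt 3 / 2 * x ≤ dist p c := by
    rintro p ⟨⟨m, n, rfl⟩, hpF⟩
    rw [smul_add_pt2] at hpF ⊢
    rw [dist_pt2]
    rw [Real.le_sqrt' (by positivity)]
    have hL : (Real.sqrt 3/2*x)^2 = 3*x^2/4 := by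
      rw [show (Real.sqrt 3/2*x)^2 = Real.sqrt 3^2*x^2/4 by ring, h3]
    have hB : ((m:ℝ)*0 + (n:ℝ)*(Real.sqrt 3/2*x) - 0)^2 = (n:ℝ)^2*3*x^2/4 := by
      rw [show ((m:ℝ)*0 + (n:ℝ)*(Real.sqrt 3/2*x) - 0)^2
          = (n:ℝ)^2*Real.sqrt 3^2*x^2/4 by ring, h3]
    rw [hL, hB]
    by_cases hn : n = 0
    · subst hn
      have hm0 : m ≠ 0 := by
        rintro rfl
        exact hpF (Or.inl (pt2_congr (by push_cast; ring) (by push_cast; ring)))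
      have hm1 : m ≠ 1 := by
        rintro rfl
        exact hpF (Or.inr (pt2_congr (by push_cast; ring) (by push_cast; ring)))
      have hmr : (m:ℝ) ≤ -1 ∨ 2 ≤ (m:ℝ) := by
        have : m ≤ -1 ∨ 2 ≤ m := by omega
        exact this.imp (by exact_mod_cast ·) (by exact_mod_cast ·)
      rcases hmr with h | h <;> push_cast <;>
        nlinarith [sq_nonneg (((m:ℝ)+1)*x), sq_nonneg (((m:ℝ)-2)*x),
          sq_nonneg x, mul_pos hx hx]
    · have hnr : (n:ℝ) ≤ -1 ∨ 1 ≤ (n:ℝ) := by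
        have : n ≤ -1 ∨ 1 ≤ n := by omega
        exact this.imp (by exact_mod_cast ·) (by exact_mod_cast ·)
      have hn2 : (1:ℝ) ≤ (n:ℝ)^2 := by rcases hnr with h | h <;> nlinarith
      nlinarith [sq_nonneg ((m:ℝ)*x + (n:ℝ)*(x/2) - x/2),
        mul_nonneg (sub_nonneg.mpr hn2) (sq_nonneg x)]
  have hmem : v₂ ∈ L \ F := by
    constructor
    · exact ⟨0, 1, by push_cast; simp⟩
    · intro h
      rcases h with h | h
      · exact absurd (pt2_inj h).1 (by simp; linarith)
      · have := (pt2_inj h).2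
        have : Real.sqrt 3 / 2 * x = 0 := this
        nlinarith
  have hdv₂ : dist v₂ c = Real.sqrt 3 / 2 * x := by
    rw [dist_pt2]
    rw [show (x/2 - x/2)^2 + (Real.sqrt 3/2*x - 0)^2 = (Real.sqrt 3/2*x)^2 by ring]
    exact Real.sqrt_sq (by positivity)
  refine ⟨?_, ⟨⟨v₂, hmem, hdv₂⟩, ?_⟩, by ring, by nlinarith, ?_⟩
  · rintro p (rfl | rfl) <;> rw [dist_pt2]
    · rw [show (0 - x/2)^2 + ((0:ℝ)-0)^2 = (x/2)^2 by ring]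
      exact Real.sqrt_sq (by positivity)
    · rw [show (x - x/2)^2 + ((0:ℝ)-0)^2 = (x/2)^2 by ring]
      exact Real.sqrt_sq (by positivity)
  · rintro y ⟨p, hp, rfl⟩
    exact key p hp
  · intro p hp
    have := key p hp
    intro hlt
    nlinarith
end

section
/- Let a, b, c, d ∈ ℝ² with a ≠ b, c ≠ d, and {a, b} ∩ {c, d} = ∅. Suppose that c and d both lie strictly outside the minimum bounding ball of {a, b} (i.e., ‖c − (a+b)/2‖ > ‖a − b‖/2 and ‖d − (a+b)/2‖ > ‖a − b‖/2), and that a and b both lie strictly outside the minimum bounding ball of {c, d} (i.e., ‖a − (c+d)/2‖ > ‖c − d‖/2 and ‖b − (c+d)/2‖ > ‖c − d‖/2). Then the closed segments [a, b] and [c, d] are disjoint. -/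
open RealInnerProductSpace

private lemma quad_interp {E : Type*} [NormedAddCommGroup E] [InnerProductSpace ℝ E]
    (u v p w : E) (t1 t2 : ℝ) (h : t1 + t2 = 1) :
    ⟪(t1 • u + t2 • v) - p, (t1 • u + t2 • v) - w⟫ =
      t1 * ⟪u - p, u - w⟫ + t2 * ⟪v - p, v - w⟫ - t1 * t2 * ‖u - v‖ ^ 2 := by
  have h2 : t2 = 1 - t1 := by linarith
  subst h2
  simp only [← real_inner_self_eq_norm_sq, inner_sub_left, inner_sub_right,
    inner_add_left, inner_add_right, real_inner_smul_left, real_inner_smul_right]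
  ring

private lemma ball_ip {E : Type*} [NormedAddCommGroup E] [InnerProductSpace ℝ E]
    (p u v : E) :
    ⟪p - u, p - v⟫ = dist p (midpoint ℝ u v) ^ 2 - (dist u v / 2) ^ 2 := by
  rw [dist_eq_norm, dist_eq_norm, midpoint_eq_smul_add, div_pow,
    show ((2:ℝ)^2) = 4 by norm_num, show (⅟(2:ℝ)) = 1/2 by norm_num]
  simp only [← real_inner_self_eq_norm_sq, inner_sub_left, inner_sub_right,
    inner_add_left, inner_add_right, real_inner_smul_left, real_inner_smul_right]
  rw [real_inner_comm v u, real_inner_comm p u, real_inner_comm p v]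
  ring

/-- Let `a, b, c, d ∈ ℝ²` with `a ≠ b`, `c ≠ d` and
`{a, b} ∩ {c, d} = ∅`. If `c` and `d` lie strictly outside the minimum bounding ball
of `{a, b}` and `a` and `b` lie strictly outside the minimum bounding ball of `{c, d}`,
then the closed segments `[a, b]` and `[c, d]` are disjoint. -/
theorem minimum_ball_segments_disjoint (a b c d : EuclideanSpace ℝ (Fin 2))
    (hab : a ≠ b) (hcd : c ≠ d)
    (hsep : ({a, b} : Set (EuclideanSpace ℝ (Fin 2))) ∩ {c, d} = ∅)
    (h1 : dist a b / 2 < dist c (midpoint ℝ a b))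
    (h2 : dist a b / 2 < dist d (midpoint ℝ a b))
    (h3 : dist c d / 2 < dist a (midpoint ℝ c d))
    (h4 : dist c d / 2 < dist b (midpoint ℝ c d)) :
    segment ℝ a b ∩ segment ℝ c d = ∅ := by
  rw [Set.eq_empty_iff_forall_notMem]
  rintro x ⟨hx1, hx2⟩
  obtain ⟨t1, t2, ht1, ht2, hts, hxab⟩ := hx1
  obtain ⟨s1, s2, hs1, hs2, hss, hxcd⟩ := hx2
  have hd1 : (0:ℝ) ≤ dist a b / 2 := by positivity
  have hd2 : (0:ℝ) ≤ dist c d / 2 := by positivity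
  have fc : 0 < ⟪c - a, c - b⟫ := by rw [ball_ip]; nlinarith
  have fd : 0 < ⟪d - a, d - b⟫ := by rw [ball_ip]; nlinarith
  have ga : 0 < ⟪a - c, a - d⟫ := by rw [ball_ip]; nlinarith
  have gb : 0 < ⟪b - c, b - d⟫ := by rw [ball_ip]; nlinarith
  have e1 : ⟪x - a, x - b⟫ = -(t1 * t2 * ‖a - b‖ ^ 2) := by
    rw [← hxab, quad_interp a b a b t1 t2 hts]
    simp [sub_self]
  have e2 : ⟪x - a, x - b⟫ =
      s1 * ⟪c - a, c - b⟫ + s2 * ⟪d - a, d - b⟫ - s1 * s2 * ‖c - d‖ ^ 2 := by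
    rw [← hxcd, quad_interp c d a b s1 s2 hss]
  have e3 : ⟪x - c, x - d⟫ = -(s1 * s2 * ‖c - d‖ ^ 2) := by
    rw [← hxcd, quad_interp c d c d s1 s2 hss]
    simp [sub_self]
  have e4 : ⟪x - c, x - d⟫ =
      t1 * ⟪a - c, a - d⟫ + t2 * ⟪b - c, b - d⟫ - t1 * t2 * ‖a - b‖ ^ 2 := by
    rw [← hxab, quad_interp a b c d t1 t2 hts]
  have key : s1 * ⟪c - a, c - b⟫ + s2 * ⟪d - a, d - b⟫ +
      t1 * ⟪a - c, a - d⟫ + t2 * ⟪b - c, b - d⟫ = 0 := by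
    linear_combination e1 - e2 + e3 - e4
  rcases (by by_contra h; push_neg at h; linarith : 0 < s1 ∨ 0 < s2) with hpos | hpos
  · linarith [mul_pos hpos fc, mul_nonneg hs2 fd.le, mul_nonneg ht1 ga.le,
      mul_nonneg ht2 gb.le]
  · linarith [mul_pos hpos fd, mul_nonneg hs1 fc.le, mul_nonneg ht1 ga.le,
      mul_nonneg ht2 gb.le]
end

section
/- Let A, B, C ∈ ℝ² be affinely independent and suppose the triangle ABC is non-obtuse (each of the angles ∠(B,A,C), ∠(A,B,C), ∠(A,C,B) is at most π/2). Let D = (A+B)/2, E = (A+C)/2, F = (B+C)/2 be the edge midpoints, and consider the four sub-triangles ADE, BDF, CEF, and DEF. Then for each of these four sub-triangles T, no point of {A, B, C, D, E, F} other than the three vertices of T lies strictly inside the closed circumscribed disk of T (the closed disk centered at the circumcenter of T with radius the circumradius of T). -/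
open EuclideanGeometry RealInnerProductSpace

section helpers

variable {V : Type*} [NormedAddCommGroup V] [InnerProductSpace ℝ V]

private lemma inner_nonneg_of_angle_le (x y : V)
    (h : InnerProductGeometry.angle x y ≤ Real.pi / 2) : 0 ≤ ⟪x, y⟫ := by
  rw [InnerProductGeometry.angle, Real.arccos_le_pi_div_two, div_nonneg_iff] at h
  rcases h with ⟨h, _⟩ | ⟨_, h⟩
  · exact h
  · have h0 : ‖x‖ * ‖y‖ = 0 :=
      le_antisymm h (mul_nonneg (norm_nonneg _) (norm_nonneg _))
    have h1 := abs_real_inner_le_norm x y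
    have h2 := abs_nonneg ⟪x, y⟫
    have h3 := neg_abs_le ⟪x, y⟫
    nlinarith

private lemma smul_inner_nonneg (x y : V) (h : 0 ≤ ⟪x, y⟫) :
    0 ≤ ⟪(2⁻¹ : ℝ) • x, (2⁻¹ : ℝ) • y⟫ := by
  rw [real_inner_smul_left, real_inner_smul_right]
  linarith

private lemma reflect_ge (a d : V) (ρ : ℝ) (hρ : 0 ≤ ρ)
    (ha : ‖a‖ = ρ) (hd : ‖d‖ = ρ) : ρ ≤ ‖(2 : ℝ) • d - a‖ := by
  have hcs : ⟪d, a⟫ ≤ ‖d‖ * ‖a‖ := real_inner_le_norm d a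
  have hexp : ‖(2 : ℝ) • d - a‖ ^ 2 = 4 * ‖d‖ ^ 2 - 4 * ⟪d, a⟫ + ‖a‖ ^ 2 := by
    rw [norm_sub_sq_real, norm_smul, real_inner_smul_left]
    simp [mul_pow]
    ring
  nlinarith [norm_nonneg ((2 : ℝ) • d - a), sq_nonneg (‖(2 : ℝ) • d - a‖ - ρ)]

private lemma sum_ge (a d e : V) (ρ : ℝ) (hρ : 0 ≤ ρ)
    (ha : ‖a‖ = ρ) (hd : ‖d‖ = ρ) (he : ‖e‖ = ρ)
    (hang : 0 ≤ ⟪d - a, e - a⟫) : ρ ≤ ‖d + e - a‖ := by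
  have h1 : ⟪d - a, e - a⟫ = ⟪d, e⟫ - ⟪d, a⟫ - ⟪a, e⟫ + ‖a‖ ^ 2 := by
    rw [inner_sub_left, inner_sub_right, inner_sub_right, real_inner_self_eq_norm_sq]
    ring
  have hexp : ‖d + e - a‖ ^ 2
      = ‖d‖ ^ 2 + ‖e‖ ^ 2 + ‖a‖ ^ 2 + 2 * ⟪d, e⟫ - 2 * ⟪d, a⟫ - 2 * ⟪a, e⟫ := by
    rw [norm_sub_sq_real, norm_add_sq_real, inner_add_left, real_inner_comm e a]
    ring
  nlinarith [norm_nonneg (d + e - a), sq_nonneg (‖d + e - a‖ - ρ)]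

end helpers

/-- Let `A, B, C ∈ ℝ²` be affinely independent and suppose the
triangle `ABC` is non-obtuse. Let `D, E, F` be the edge midpoints of `AB`, `AC`, `BC`.
Then for each of the four sub-triangles `ADE`, `BDF`, `CEF`, `DEF`, no point of
`{A, B, C, D, E, F}` other than its three vertices lies strictly inside its closed
circumscribed disk (the disk centered at its circumcenter, the unique point equidistant
from its three vertices, with radius the circumradius). -/
theorem midpoint_subdivision_minimum_ball (A B C : EuclideanSpace ℝ (Fin 2))
    (hai : AffineIndependent ℝ ![A, B, C])
    (h₁ : EuclideanGeometry.angle B A C ≤ Real.pi / 2)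
    (h₂ : EuclideanGeometry.angle A B C ≤ Real.pi / 2)
    (h₃ : EuclideanGeometry.angle A C B ≤ Real.pi / 2) :
    let D := midpoint ℝ A B
    let E := midpoint ℝ A C
    let F := midpoint ℝ B C
    let pts : Set (EuclideanSpace ℝ (Fin 2)) := {A, B, C, D, E, F}
    (∀ (N : EuclideanSpace ℝ (Fin 2)) (ρ : ℝ),
        dist A N = ρ → dist D N = ρ → dist E N = ρ →
        ∀ q ∈ pts, q ∉ ({A, D, E} : Set (EuclideanSpace ℝ (Fin 2))) → ¬ dist q N < ρ) ∧
    (∀ (N : EuclideanSpace ℝ (Fin 2)) (ρ : ℝ),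
        dist B N = ρ → dist D N = ρ → dist F N = ρ →
        ∀ q ∈ pts, q ∉ ({B, D, F} : Set (EuclideanSpace ℝ (Fin 2))) → ¬ dist q N < ρ) ∧
    (∀ (N : EuclideanSpace ℝ (Fin 2)) (ρ : ℝ),
        dist C N = ρ → dist E N = ρ → dist F N = ρ →
        ∀ q ∈ pts, q ∉ ({C, E, F} : Set (EuclideanSpace ℝ (Fin 2))) → ¬ dist q N < ρ) ∧
    (∀ (N : EuclideanSpace ℝ (Fin 2)) (ρ : ℝ),
        dist D N = ρ → dist E N = ρ → dist F N = ρ →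
        ∀ q ∈ pts, q ∉ ({D, E, F} : Set (EuclideanSpace ℝ (Fin 2))) → ¬ dist q N < ρ) := by
  intro D E F pts
  have hD : D = (2⁻¹ : ℝ) • (A + B) := by
    show midpoint ℝ A B = _
    rw [midpoint_eq_smul_add]
    norm_num
  have hE : E = (2⁻¹ : ℝ) • (A + C) := by
    show midpoint ℝ A C = _
    rw [midpoint_eq_smul_add]
    norm_num
  have hF : F = (2⁻¹ : ℝ) • (B + C) := by
    show midpoint ℝ B C = _
    rw [midpoint_eq_smul_add]
    norm_num
  have i₁ : 0 ≤ ⟪B - A, C - A⟫ := by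
    have := inner_nonneg_of_angle_le (B -ᵥ A) (C -ᵥ A) h₁
    simpa using this
  have i₂ : 0 ≤ ⟪A - B, C - B⟫ := by
    have := inner_nonneg_of_angle_le (A -ᵥ B) (C -ᵥ B) h₂
    simpa using this
  have i₃ : 0 ≤ ⟪A - C, B - C⟫ := by
    have := inner_nonneg_of_angle_le (A -ᵥ C) (B -ᵥ C) h₃
    simpa using this
  have i₁' : 0 ≤ ⟪A - C, A - B⟫ := by
    rw [← neg_sub C A, ← neg_sub B A, inner_neg_neg, real_inner_comm]
    exact i₁
  have i₂' : 0 ≤ ⟪B - C, B - A⟫ := by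
    rw [← neg_sub C B, ← neg_sub A B, inner_neg_neg, real_inner_comm]
    exact i₂
  have i₃' : 0 ≤ ⟪C - B, C - A⟫ := by
    rw [← neg_sub B C, ← neg_sub A C, inner_neg_neg, real_inner_comm]
    exact i₃
  refine ⟨?_, ?_, ?_, ?_⟩
  · -- triangle A D E : outside points B, C, F
    intro N ρ r1 r2 r3 q hq hq'
    have hρ : 0 ≤ ρ := r1 ▸ dist_nonneg
    rw [dist_eq_norm] at r1 r2 r3
    rw [not_lt, dist_eq_norm]
    simp only [pts, Set.mem_insert_iff, Set.mem_singleton_iff] at hq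
    simp only [Set.mem_insert_iff, Set.mem_singleton_iff, not_or] at hq'
    obtain ⟨n1, n2, n3⟩ := hq'
    rcases hq with rfl | rfl | rfl | rfl | rfl | rfl
    · exact absurd rfl n1
    · have heq : q - N = (2 : ℝ) • (D - N) - (A - N) := by rw [hD]; module
      rw [heq]; exact reflect_ge _ _ ρ hρ r1 r2
    · have heq : q - N = (2 : ℝ) • (E - N) - (A - N) := by rw [hE]; module
      rw [heq]; exact reflect_ge _ _ ρ hρ r1 r3
    · exact absurd rfl n2
    · exact absurd rfl n3
    · have heq : F - N = (D - N) + (E - N) - (A - N) := by rw [hD, hE, hF]; module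
      have hv1 : (D - N) - (A - N) = (2⁻¹ : ℝ) • (B - A) := by rw [hD]; module
      have hv2 : (E - N) - (A - N) = (2⁻¹ : ℝ) • (C - A) := by rw [hE]; module
      have hang : 0 ≤ ⟪(D - N) - (A - N), (E - N) - (A - N)⟫ := by
        rw [hv1, hv2]; exact smul_inner_nonneg _ _ i₁
      rw [heq]; exact sum_ge _ _ _ ρ hρ r1 r2 r3 hang
  · -- triangle B D F : outside points A, C, E
    intro N ρ r1 r2 r3 q hq hq'
    have hρ : 0 ≤ ρ := r1 ▸ dist_nonneg
    rw [dist_eq_norm] at r1 r2 r3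
    rw [not_lt, dist_eq_norm]
    simp only [pts, Set.mem_insert_iff, Set.mem_singleton_iff] at hq
    simp only [Set.mem_insert_iff, Set.mem_singleton_iff, not_or] at hq'
    obtain ⟨n1, n2, n3⟩ := hq'
    rcases hq with rfl | rfl | rfl | rfl | rfl | rfl
    · have heq : q - N = (2 : ℝ) • (D - N) - (B - N) := by rw [hD]; module
      rw [heq]; exact reflect_ge _ _ ρ hρ r1 r2
    · exact absurd rfl n1
    · have heq : q - N = (2 : ℝ) • (F - N) - (B - N) := by rw [hF]; module
      rw [heq]; exact reflect_ge _ _ ρ hρ r1 r3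
    · exact absurd rfl n2
    · have heq : E - N = (D - N) + (F - N) - (B - N) := by rw [hD, hE, hF]; module
      have hv1 : (D - N) - (B - N) = (2⁻¹ : ℝ) • (A - B) := by rw [hD]; module
      have hv2 : (F - N) - (B - N) = (2⁻¹ : ℝ) • (C - B) := by rw [hF]; module
      have hang : 0 ≤ ⟪(D - N) - (B - N), (F - N) - (B - N)⟫ := by
        rw [hv1, hv2]; exact smul_inner_nonneg _ _ i₂
      rw [heq]; exact sum_ge _ _ _ ρ hρ r1 r2 r3 hang
    · exact absurd rfl n3
  · -- triangle C E F : outside points A, B, D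
    intro N ρ r1 r2 r3 q hq hq'
    have hρ : 0 ≤ ρ := r1 ▸ dist_nonneg
    rw [dist_eq_norm] at r1 r2 r3
    rw [not_lt, dist_eq_norm]
    simp only [pts, Set.mem_insert_iff, Set.mem_singleton_iff] at hq
    simp only [Set.mem_insert_iff, Set.mem_singleton_iff, not_or] at hq'
    obtain ⟨n1, n2, n3⟩ := hq'
    rcases hq with rfl | rfl | rfl | rfl | rfl | rfl
    · have heq : q - N = (2 : ℝ) • (E - N) - (C - N) := by rw [hE]; module
      rw [heq]; exact reflect_ge _ _ ρ hρ r1 r2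
    · have heq : q - N = (2 : ℝ) • (F - N) - (C - N) := by rw [hF]; module
      rw [heq]; exact reflect_ge _ _ ρ hρ r1 r3
    · exact absurd rfl n1
    · have heq : D - N = (E - N) + (F - N) - (C - N) := by rw [hD, hE, hF]; module
      have hv1 : (E - N) - (C - N) = (2⁻¹ : ℝ) • (A - C) := by rw [hE]; module
      have hv2 : (F - N) - (C - N) = (2⁻¹ : ℝ) • (B - C) := by rw [hF]; module
      have hang : 0 ≤ ⟪(E - N) - (C - N), (F - N) - (C - N)⟫ := by
        rw [hv1, hv2]; exact smul_inner_nonneg _ _ i₃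
      rw [heq]; exact sum_ge _ _ _ ρ hρ r1 r2 r3 hang
    · exact absurd rfl n2
    · exact absurd rfl n3
  · -- triangle D E F : outside points A, B, C
    intro N ρ r1 r2 r3 q hq hq'
    have hρ : 0 ≤ ρ := r1 ▸ dist_nonneg
    rw [dist_eq_norm] at r1 r2 r3
    rw [not_lt, dist_eq_norm]
    simp only [pts, Set.mem_insert_iff, Set.mem_singleton_iff] at hq
    simp only [Set.mem_insert_iff, Set.mem_singleton_iff, not_or] at hq'
    obtain ⟨n1, n2, n3⟩ := hq'
    rcases hq with rfl | rfl | rfl | rfl | rfl | rfl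
    · have heq : q - N = (D - N) + (E - N) - (F - N) := by rw [hD, hE, hF]; module
      have hv1 : (D - N) - (F - N) = (2⁻¹ : ℝ) • (q - C) := by rw [hD, hF]; module
      have hv2 : (E - N) - (F - N) = (2⁻¹ : ℝ) • (q - B) := by rw [hE, hF]; module
      have hang : 0 ≤ ⟪(D - N) - (F - N), (E - N) - (F - N)⟫ := by
        rw [hv1, hv2]; exact smul_inner_nonneg _ _ i₁'
      rw [heq]; exact sum_ge _ _ _ ρ hρ r3 r1 r2 hang
    · have heq : q - N = (D - N) + (F - N) - (E - N) := by rw [hD, hE, hF]; module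
      have hv1 : (D - N) - (E - N) = (2⁻¹ : ℝ) • (q - C) := by rw [hD, hE]; module
      have hv2 : (F - N) - (E - N) = (2⁻¹ : ℝ) • (q - A) := by rw [hE, hF]; module
      have hang : 0 ≤ ⟪(D - N) - (E - N), (F - N) - (E - N)⟫ := by
        rw [hv1, hv2]; exact smul_inner_nonneg _ _ i₂'
      rw [heq]; exact sum_ge _ _ _ ρ hρ r2 r1 r3 hang
    · have heq : q - N = (E - N) + (F - N) - (D - N) := by rw [hD, hE, hF]; module
      have hv1 : (E - N) - (D - N) = (2⁻¹ : ℝ) • (q - B) := by rw [hD, hE]; module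
      have hv2 : (F - N) - (D - N) = (2⁻¹ : ℝ) • (q - A) := by rw [hD, hF]; module
      have hang : 0 ≤ ⟪(E - N) - (D - N), (F - N) - (D - N)⟫ := by
        rw [hv1, hv2]; exact smul_inner_nonneg _ _ i₃'
      rw [heq]; exact sum_ge _ _ _ ρ hρ r1 r2 r3 hang
    · exact absurd rfl n1
    · exact absurd rfl n2
    · exact absurd rfl n3
end

section
/- Let A, B, C ∈ ℝ² be affinely independent, let D = (A+B)/2, E = (A+C)/2, F = (B+C)/2 be the edge midpoints, and let N and ρ be the circumcenter and circumradius of the medial triangle DEF. Then ‖A − N‖² − ρ² = (‖B − A‖·‖C − A‖·cos ∠(B,A,C)) / 2. Consequently, the vertex A lies strictly inside the closed circumscribed disk of the medial triangle DEF if and only if the angle ∠(B,A,C) is obtuse (strictly greater than π/2). -/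
set_option maxHeartbeats 1000000

lemma cos_neg_iff_obtuse {θ : ℝ} (h0 : 0 ≤ θ) (h1 : θ ≤ Real.pi) :
    Real.cos θ < 0 ↔ Real.pi / 2 < θ := by
  constructor
  · intro h
    by_contra hle
    push_neg at hle
    have := Real.cos_nonneg_of_mem_Icc ⟨by linarith [Real.pi_pos], hle⟩
    linarith
  · intro h
    have := Real.cos_lt_cos_of_nonneg_of_le_pi (by positivity) h1 h
    simpa using this

/-- Let `A, B, C ∈ ℝ²` be affinely independent, let `D, E, F` be the
edge midpoints of `AB`, `AC`, `BC`, and let `N` and `ρ` be the circumcenter and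
circumradius of the medial triangle `DEF`. Then
`‖A − N‖² − ρ² = (‖B − A‖·‖C − A‖·cos ∠(B,A,C)) / 2`; consequently `A` lies strictly
inside the closed circumscribed disk of `DEF` iff the angle `∠(B,A,C)` is obtuse. -/
theorem power_of_vertex_wrt_medial_triangle (A B C : EuclideanSpace ℝ (Fin 2))
    (hai : AffineIndependent ℝ ![A, B, C])
    (N : EuclideanSpace ℝ (Fin 2)) (ρ : ℝ)
    -- `N` is the circumcenter of the medial triangle `DEF` and `ρ` its circumradius
    (hD : dist (midpoint ℝ A B) N = ρ)
    (hE : dist (midpoint ℝ A C) N = ρ)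
    (hF : dist (midpoint ℝ B C) N = ρ) :
    dist A N ^ 2 - ρ ^ 2 =
      dist B A * dist C A * Real.cos (EuclideanGeometry.angle B A C) / 2 ∧
    (dist A N < ρ ↔ Real.pi / 2 < EuclideanGeometry.angle B A C) := by
  have hAB : A ≠ B := fun h => (by decide : ¬(0 : Fin 3) = 1) (hai.injective (by simpa using h))
  have hAC : A ≠ C := fun h => (by decide : ¬(0 : Fin 3) = 2) (hai.injective (by simpa using h))
  set u : EuclideanSpace ℝ (Fin 2) := B - A with hu
  set v : EuclideanSpace ℝ (Fin 2) := C - A with hv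
  set n : EuclideanSpace ℝ (Fin 2) := N - A with hn
  have hune : u ≠ 0 := sub_ne_zero.mpr (Ne.symm hAB)
  have hvne : v ≠ 0 := sub_ne_zero.mpr (Ne.symm hAC)
  have hmid : ∀ X Y : EuclideanSpace ℝ (Fin 2),
      midpoint ℝ X Y - N = (1/2 : ℝ) • ((X - A) + (Y - A)) - n := by
    intro X Y
    rw [midpoint_eq_smul_add, hn, invOf_eq_inv]
    module
  have expand : ∀ w : EuclideanSpace ℝ (Fin 2),
      ‖(1/2 : ℝ) • w - n‖ ^ 2 = (1/4) * ‖w‖^2 - inner ℝ w n + ‖n‖^2 := by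
    intro w
    rw [norm_sub_sq_real, norm_smul, real_inner_smul_left, Real.norm_eq_abs,
      abs_of_pos (by norm_num : (0:ℝ) < 1/2)]
    ring
  have key : ∀ X Y : EuclideanSpace ℝ (Fin 2), dist (midpoint ℝ X Y) N = ρ →
      (1/4) * ‖(X - A) + (Y - A)‖^2 - inner ℝ ((X - A) + (Y - A)) n + ‖n‖^2 = ρ^2 := by
    intro X Y h
    rw [← expand, ← hmid, ← dist_eq_norm, h]
  have h1 := key A B hD
  have h2 := key A C hE
  have h3 := key B C hF
  simp only [sub_self, zero_add] at h1 h2 h3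
  rw [← hv] at h2
  rw [← hu, ← hv] at h3
  have hdAN : dist A N = ‖n‖ := by rw [hn, dist_eq_norm, norm_sub_rev]
  have hP : ‖n‖^2 - ρ^2 = inner ℝ u v / 2 := by
    have e3 : ‖u + v‖^2 = ‖u‖^2 + 2 * inner ℝ u v + ‖v‖^2 := norm_add_sq_real u v
    have e4 : (inner ℝ (u + v) n : ℝ) = inner ℝ u n + inner ℝ v n := inner_add_left u v n
    rw [e3, e4] at h3
    nlinarith [h1, h2, h3]
  have hinner : (inner ℝ u v : ℝ) = dist B A * dist C A * Real.cos (EuclideanGeometry.angle B A C) := by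
    have : EuclideanGeometry.angle B A C = InnerProductGeometry.angle u v := by
      rw [EuclideanGeometry.angle, hu, hv]; rfl
    rw [this, dist_eq_norm, dist_eq_norm, ← hu, ← hv,
      ← InnerProductGeometry.cos_angle_mul_norm_mul_norm]
    ring
  constructor
  · rw [hdAN, hP, hinner]
  · rw [hdAN]
    have hρ : 0 ≤ ρ := hD ▸ dist_nonneg
    have hlt : ‖n‖ < ρ ↔ (inner ℝ u v : ℝ) < 0 := by
      constructor
      · intro h; nlinarith [norm_nonneg n, hP]
      · intro h; nlinarith [norm_nonneg n, hP]
    rw [hlt, hinner]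
    have hbpos : 0 < dist B A := dist_pos.mpr (sub_ne_zero.mp hune)
    have hcpos : 0 < dist C A := dist_pos.mpr (sub_ne_zero.mp hvne)
    have hpc : 0 < dist B A * dist C A := mul_pos hbpos hcpos
    have hcosiff : dist B A * dist C A * Real.cos (EuclideanGeometry.angle B A C) < 0 ↔
        Real.cos (EuclideanGeometry.angle B A C) < 0 := by
      constructor
      · intro h
        by_contra h'
        push_neg at h'
        exact absurd h (not_lt.mpr (mul_nonneg hpc.le h'))
      · intro h
        exact mul_neg_of_pos_of_neg hpc h
    rw [hcosiff]
    exact cos_neg_iff_obtuse (EuclideanGeometry.angle_nonneg B A C)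
      (EuclideanGeometry.angle_le_pi B A C)
end
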